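/- Let A, B be real n×n matrices, both invertible, and let b ∈ ℝ^n be such that B⁻¹ b is entrywise nonnegative and B⁻¹ b ≠ 0. If σ_min(A⁻¹ B) > 1, then the generalized absolute value equation A x − B |x| = b has no solution x ∈ ℝ^n. -/

import Mathlib

/-- The Euclidean (`ℓ2`) norm of a vector in `ℝ^n`. -/
noncomputable def euclNorm {n : ℕ} (x : Fin n → ℝ) : ℝ :=
  Real.sqrt (∑ i, x i ^ 2)

/-- The largest singular value of a real square matrix: the operator norm
induced by the Euclidean vector norm, i.e. the supremum of `‖M x‖₂` over unit
vectors `x`. -/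
noncomputable def sigmaMax {n : ℕ} (M : Matrix (Fin n) (Fin n) ℝ) : ℝ :=
  sSup {r : ℝ | ∃ x : Fin n → ℝ, euclNorm x = 1 ∧ r = euclNorm (M.mulVec x)}

/-- The smallest singular value of a real square matrix: the infimum of
`‖M x‖₂` over unit vectors `x`. -/
noncomputable def sigmaMin {n : ℕ} (M : Matrix (Fin n) (Fin n) ℝ) : ℝ :=
  sInf {r : ℝ | ∃ x : Fin n → ℝ, euclNorm x = 1 ∧ r = euclNorm (M.mulVec x)}

lemma euclNorm_nonneg' {n : ℕ} (x : Fin n → ℝ) : 0 ≤ euclNorm x :=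
  Real.sqrt_nonneg _

lemma euclNorm_pos' {n : ℕ} {x : Fin n → ℝ} (hx : x ≠ 0) : 0 < euclNorm x := by
  obtain ⟨j, hj⟩ := Function.ne_iff.mp hx
  apply Real.sqrt_pos.mpr
  have hj' : x j ≠ 0 := hj
  exact Finset.sum_pos' (fun i _ => sq_nonneg _)
    ⟨j, Finset.mem_univ j, by positivity⟩

lemma euclNorm_smul' {n : ℕ} (c : ℝ) (x : Fin n → ℝ) :
    euclNorm (c • x) = |c| * euclNorm x := by
  unfold euclNorm
  have hs : ∑ i, (c • x) i ^ 2 = c ^ 2 * ∑ i, x i ^ 2 := by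
    rw [Finset.mul_sum]
    exact Finset.sum_congr rfl fun i _ => by simp [mul_pow]
  rw [hs, Real.sqrt_mul (sq_nonneg c), Real.sqrt_sq_eq_abs]

lemma sigmaMin_mul_le' {n : ℕ} (M : Matrix (Fin n) (Fin n) ℝ) (v : Fin n → ℝ)
    (hv : v ≠ 0) : sigmaMin M * euclNorm v ≤ euclNorm (M.mulVec v) := by
  have hpos : 0 < euclNorm v := euclNorm_pos' hv
  set u : Fin n → ℝ := (euclNorm v)⁻¹ • v with hu_def
  have hu : euclNorm u = 1 := by
    rw [hu_def, euclNorm_smul', abs_of_pos (inv_pos.2 hpos),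
      inv_mul_cancel₀ hpos.ne']
  have hbdd : BddBelow {r : ℝ | ∃ x : Fin n → ℝ, euclNorm x = 1 ∧ r = euclNorm (M.mulVec x)} := by
    refine ⟨0, ?_⟩
    rintro r ⟨x, _, rfl⟩
    exact euclNorm_nonneg' _
  have h1 : sigmaMin M ≤ euclNorm (M.mulVec u) :=
    csInf_le hbdd ⟨u, hu, rfl⟩
  have h2 : M.mulVec u = (euclNorm v)⁻¹ • M.mulVec v := by
    rw [hu_def]
    exact Matrix.mulVec_smul ..
  have h3 : euclNorm (M.mulVec u) = (euclNorm v)⁻¹ * euclNorm (M.mulVec v) := by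
    rw [h2, euclNorm_smul', abs_of_pos (inv_pos.2 hpos)]
  calc sigmaMin M * euclNorm v ≤ ((euclNorm v)⁻¹ * euclNorm (M.mulVec v)) * euclNorm v := by
        apply mul_le_mul_of_nonneg_right _ hpos.le
        rw [← h3]; exact h1
    _ = euclNorm (M.mulVec v) := by field_simp

/-- If `A` and `B` are invertible, `B⁻¹ b ≥ 0` entrywise with
`B⁻¹ b ≠ 0`, and `σ_min(A⁻¹ B) > 1`, then the GAVE `A x − B |x| = b` has no
solution. -/
theorem gave_no_solution_of_sigmaMin_inv_mul {n : ℕ} (A B : Matrix (Fin n) (Fin n) ℝ)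
    (hA : IsUnit A) (hB : IsUnit B) (b : Fin n → ℝ)
    (hb : ∀ i, 0 ≤ B⁻¹.mulVec b i) (hb0 : B⁻¹.mulVec b ≠ 0)
    (h : 1 < sigmaMin (A⁻¹ * B)) :
    ¬ ∃ x : Fin n → ℝ, A.mulVec x - B.mulVec (fun i => |x i|) = b := by
  rintro ⟨x, hx⟩
  have hAd : IsUnit A.det := (Matrix.isUnit_iff_isUnit_det A).mp hA
  have hBd : IsUnit B.det := (Matrix.isUnit_iff_isUnit_det B).mp hB
  set M := A⁻¹ * B with hM
  set d := B⁻¹.mulVec b with hd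
  set a : Fin n → ℝ := fun i => |x i| with ha
  -- x = M.mulVec (a + d)
  have hxy : x = M.mulVec (a + d) := by
    have h1 : A.mulVec x = B.mulVec a + b := by
      rw [← hx]; ring_nf
    have h2 : x = A⁻¹.mulVec (B.mulVec a + b) := by
      rw [← h1, Matrix.mulVec_mulVec, Matrix.nonsing_inv_mul A hAd, Matrix.one_mulVec]
    have h3 : B.mulVec d = b := by
      rw [hd, Matrix.mulVec_mulVec, Matrix.mul_nonsing_inv B hBd, Matrix.one_mulVec]
    rw [h2, hM]
    have h4 : (A⁻¹ * B).mulVec d = A⁻¹.mulVec (B.mulVec d) :=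
      (Matrix.mulVec_mulVec d A⁻¹ B).symm
    rw [h3] at h4
    simp only [Matrix.mulVec_add, Matrix.mulVec_mulVec, h4]
  set y := a + d with hy
  -- euclNorm x < euclNorm y
  obtain ⟨j, hj⟩ := Function.ne_iff.mp hb0
  have hdj : 0 < d j := lt_of_le_of_ne (hb j) (Ne.symm hj)
  have hxlt : euclNorm x < euclNorm y := by
    unfold euclNorm
    apply Real.sqrt_lt_sqrt (Finset.sum_nonneg fun i _ => sq_nonneg _)
    refine Finset.sum_lt_sum ?_ ⟨j, Finset.mem_univ j, ?_⟩
    · intro i _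
      have : x i ^ 2 = a i ^ 2 := (sq_abs (x i)).symm
      rw [this]
      have h0 : 0 ≤ a i := abs_nonneg _
      have : a i ≤ y i := by
        simp only [hy, Pi.add_apply]
        linarith [hb i]
      nlinarith
    · have : x j ^ 2 = a j ^ 2 := (sq_abs (x j)).symm
      rw [this]
      have h0 : 0 ≤ a j := abs_nonneg _
      have : y j = a j + d j := rfl
      nlinarith
  have hyj : 0 < y j := by
    have h0 : 0 ≤ a j := abs_nonneg _
    simp only [hy, Pi.add_apply]
    linarith
  have hy0 : y ≠ 0 := by
    intro h0
    rw [h0] at hyj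
    simp at hyj
  have hypos : 0 < euclNorm y := euclNorm_pos' hy0
  have key : sigmaMin M * euclNorm y ≤ euclNorm (M.mulVec y) :=
    sigmaMin_mul_le' M y hy0
  rw [← hxy] at key
  have hlt : euclNorm y < sigmaMin M * euclNorm y := by
    nlinarith
  linarith
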